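/- Generalised early recovery principle: if P is a dynamic logic program such that ρ(P) is an acyclic program and all conflicts in P are solved, then P has at least one extended WS-model and at least one extended RD-model, i.e. WS'(P) ≠ ∅ and RD'(P) ≠ ∅. -/

import Mathlib

namespace RuleUpdates

/-- Objective literal: an atom (a natural number) or its strong negation. -/
inductive OLit where
  | pos : ℕ → OLit
  | neg : ℕ → OLit
deriving DecidableEq

/-- Strong negation on objective literals (with ¬¬p identified with p). -/
def OLit.compl : OLit → OLit
  | .pos p => .neg p
  | .neg p => .pos p

/-- Literal: an objective literal or its default negation (not not l = l). -/
inductive Lit where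
  | obj : OLit → Lit
  | ndef : OLit → Lit
deriving DecidableEq

/-- Extended rule: a head literal and a finite set of body literals. -/
structure Rule where
  head : Lit
  body : Finset Lit

/-- Interpretation: a consistent set of objective literals. -/
def Interp (J : Set OLit) : Prop :=
  ∀ p : ℕ, ¬ (OLit.pos p ∈ J ∧ OLit.neg p ∈ J)

/-- Satisfaction of a literal. -/
def satLit (J : Set OLit) : Lit → Prop
  | .obj l => l ∈ J
  | .ndef l => l ∉ J

/-- Satisfaction of a set of body literals. -/
def satBody (J : Set OLit) (B : Finset Lit) : Prop :=
  ∀ L ∈ B, satLit J L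

/-- Satisfaction of a rule. -/
def satRule (J : Set OLit) (π : Rule) : Prop :=
  satBody J π.body → satLit J π.head

/-- J is a model of a program. -/
def isModel (J : Set OLit) (P : Set Rule) : Prop :=
  ∀ π ∈ P, satRule J π

/-- J* = J ∪ { not l | l ∈ ℒ ∖ J }, as a set of literals. -/
def star (J : Set OLit) : Set Lit :=
  {L | ∃ l : OLit, (L = Lit.obj l ∧ l ∈ J) ∨ (L = Lit.ndef l ∧ l ∉ J)}

/-- def(J) = { (not l.) | l ∈ ℒ ∖ J }. -/
def defFacts (J : Set OLit) : Set Rule :=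
  {π | ∃ l : OLit, l ∉ J ∧ π = ⟨Lit.ndef l, ∅⟩}

/-- S (a set of literals) is closed under program P, all literals
treated as distinct propositional atoms. -/
def closedUnder (P : Set Rule) (S : Set Lit) : Prop :=
  ∀ π ∈ P, (π.body : Set Lit) ⊆ S → π.head ∈ S

/-- least(P): the least model of P when all literals are treated as
distinct propositional atoms. -/
def leastModel (P : Set Rule) : Set Lit :=
  ⋂₀ {S | closedUnder P S}

/-- Stable model of an extended program: J* = least(P ∪ def(J)). -/
def isStableModel (P : Set Rule) (J : Set OLit) : Prop :=
  Interp J ∧ star J = leastModel (P ∪ defFacts J)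

/-- Level of a literal, with ℓ(not l) = ℓ(l). -/
def litLevel (ℓ : OLit → ℕ) : Lit → ℕ
  | .obj l => ℓ l
  | .ndef l => ℓ l

/-- ℓ↑(S): the maximal level of a literal in the finite set S. -/
def supLevel (ℓ : OLit → ℕ) (S : Finset Lit) : ℕ :=
  S.sup (litLevel ℓ)

/-- ℓ↓(S): the minimal level of a literal in the finite set S. -/
noncomputable def infLevel (ℓ : OLit → ℕ) (S : Finset Lit) : ℕ :=
  sInf (litLevel ℓ '' (S : Set Lit))

/-- Well-supported model of an extended program w.r.t. a level mapping ℓ. -/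
def isWSModelWith (P : Set Rule) (J : Set OLit) (ℓ : OLit → ℕ) : Prop :=
  isModel J P ∧
    ∀ l ∈ J, ∃ π ∈ P, π.head = Lit.obj l ∧ satBody J π.body ∧
      supLevel ℓ π.body < ℓ l

/-- Well-supported model of an extended program. -/
def isWSModel (P : Set Rule) (J : Set OLit) : Prop :=
  Interp J ∧ ∃ ℓ : OLit → ℕ, isWSModelWith P J ℓ

/-- con(L): the literals in conflict with L. -/
def con : Lit → Finset Lit
  | .obj l => {Lit.ndef l, Lit.obj l.compl}
  | .ndef l => {Lit.obj l}

/-- ρ(P): all rules occurring in the components of the DLP. -/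
def allRules {n : ℕ} (P : Fin n → Set Rule) : Set Rule :=
  {π | ∃ i : Fin n, π ∈ P i}

/-- The rule π ∈ P i is rejected w.r.t. the set of literals S:
some later σ with conflicting head has its body included in S. -/
def rejIn {n : ℕ} (P : Fin n → Set Rule) (S : Set Lit) (i : Fin n) (π : Rule) : Prop :=
  ∃ j : Fin n, i < j ∧ ∃ σ ∈ P j, σ.head ∈ con π.head ∧ (σ.body : Set Lit) ⊆ S

/-- rem(P, S) = ρ(P) ∖ rej(P, S), as a set of component-indexed rules. -/
def remSet {n : ℕ} (P : Fin n → Set Rule) (S : Set Lit) : Set (Fin n × Rule) :=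
  {x | x.2 ∈ P x.1 ∧ ¬ rejIn P S x.1 x.2}

/-- The operator T_{P,J}. -/
def TOp {n : ℕ} (P : Fin n → Set Rule) (J : Set OLit) (S : Set Lit) : Set Lit :=
  {L | ((∃ x ∈ remSet P (star J), x.2.head = L ∧ (x.2.body : Set Lit) ⊆ S) ∨
        (∃ l : OLit, l ∉ J ∧ L = Lit.ndef l)) ∧
       ¬ ∃ σ ∈ remSet P S, σ.2.head ∈ con L ∧ (σ.2.body : Set Lit) ⊆ star J}

/-- Iterates of T_{P,J} starting from ∅. -/
def TIter {n : ℕ} (P : Fin n → Set Rule) (J : Set OLit) : ℕ → Set Lit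
  | 0 => ∅
  | k + 1 => TOp P J (TIter P J k)

/-- Extended RD-model of a DLP: J* = ⋃_{k≥0} T_{P,J}^k(∅). -/
def isExtRD {n : ℕ} (P : Fin n → Set Rule) (J : Set OLit) : Prop :=
  Interp J ∧ star J = ⋃ k : ℕ, TIter P J k

/-- rej^ℓ(P, J): π ∈ P i is rejected w.r.t. J and the level mapping ℓ. -/
def rejLvl {n : ℕ} (P : Fin n → Set Rule) (J : Set OLit) (ℓ : OLit → ℕ)
    (i : Fin n) (π : Rule) : Prop :=
  ∃ j : Fin n, i < j ∧ ∃ σ ∈ P j, σ.head ∈ con π.head ∧ satBody J σ.body ∧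
    supLevel ℓ σ.body < infLevel ℓ (con π.head)

/-- Extended WS-model of a DLP. -/
def isExtWS {n : ℕ} (P : Fin n → Set Rule) (J : Set OLit) : Prop :=
  Interp J ∧ ∃ ℓ : OLit → ℕ,
    (∀ i : Fin n, ∀ π ∈ P i, ¬ rejLvl P J ℓ i π → satRule J π) ∧
    (∀ l ∈ J, ∃ x ∈ remSet P (star J), x.2.head = Lit.obj l ∧ satBody J x.2.body ∧
      supLevel ℓ x.2.body < ℓ l)

/-- A program is acyclic w.r.t. a level mapping ℓ. -/
def acyclicWrt (Q : Set Rule) (ℓ : OLit → ℕ) : Prop :=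
  (∀ l : OLit, ℓ l = ℓ l.compl) ∧ ∀ π ∈ Q, supLevel ℓ π.body < litLevel ℓ π.head

/-- All conflicts in a DLP are solved. -/
def conflictsSolved {n : ℕ} (P : Fin n → Set Rule) : Prop :=
  ∀ i : Fin n, ∀ π ∈ P i, ∀ σ ∈ P i, σ.head ∈ con π.head →
    ∃ j : Fin n, i < j ∧ ∃ ρ ∈ P j, ρ.body = ∅ ∧
      (ρ.head ∈ con π.head ∨ ρ.head ∈ con σ.head)

section EarlyRecovery

variable {n : ℕ} (P : Fin n → Set Rule) (ℓ : OLit → ℕ)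

/-- Auxiliary: `l` is supported at slice `S`. -/
def suppAt (S : Set OLit) (l : OLit) : Prop :=
  ∃ i : Fin n, ∃ π ∈ P i, π.head = Lit.obj l ∧ satBody S π.body ∧
    ¬ ∃ j : Fin n, i < j ∧ ∃ σ ∈ P j, σ.head ∈ con (Lit.obj l) ∧ satBody S σ.body

/-- Slices of the constructed model: objective literals of level `< k`. -/
def Jlt : ℕ → Set OLit
  | 0 => ∅
  | k + 1 => Jlt k ∪ {l | ℓ l = k ∧ suppAt P (Jlt k) l}

/-- The constructed model. -/
def Jfix : Set OLit := {l | l ∈ Jlt P ℓ (ℓ l + 1)}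

lemma lt_of_mem_Jlt : ∀ {k l}, l ∈ Jlt P ℓ k → ℓ l < k := by
  intro k
  induction k with
  | zero => intro l h; exact absurd h (by simp [Jlt])
  | succ k ih =>
    intro l h
    rcases h with h | h
    · exact (ih h).trans (Nat.lt_succ_self k)
    · exact h.1 ▸ Nat.lt_succ_self k

lemma Jlt_mono : ∀ {k k'}, k ≤ k' → Jlt P ℓ k ⊆ Jlt P ℓ k' := by
  intro k k' h
  induction h with
  | refl => exact le_refl _
  | step _ ih => exact ih.trans Set.subset_union_left

lemma mem_Jlt_iff {k : ℕ} {l : OLit} :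
    l ∈ Jlt P ℓ k ↔ l ∈ Jfix P ℓ ∧ ℓ l < k := by
  constructor
  · intro h
    refine ⟨?_, lt_of_mem_Jlt P ℓ h⟩
    induction k with
    | zero => exact absurd h (by simp [Jlt])
    | succ k ih =>
      rcases h with h | h
      · exact ih h
      · have hk := h.1
        have h2 : l ∈ Jlt P ℓ (k + 1) := Set.mem_union_right _ h
        simpa [Jfix, hk] using h2
  · rintro ⟨h1, h2⟩
    exact Jlt_mono P ℓ h2 h1

lemma mem_Jfix_iff {l : OLit} :
    l ∈ Jfix P ℓ ↔ suppAt P (Jlt P ℓ (ℓ l)) l := by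
  constructor
  · intro h
    rcases h with h | h
    · exact absurd (lt_of_mem_Jlt P ℓ h) (lt_irrefl _)
    · exact h.2
  · intro h
    exact Set.mem_union_right _ ⟨rfl, h⟩

lemma satLit_slice_iff {k : ℕ} {L : Lit} (hL : litLevel ℓ L < k) :
    satLit (Jlt P ℓ k) L ↔ satLit (Jfix P ℓ) L := by
  cases L with
  | obj m =>
    simp only [satLit, mem_Jlt_iff]
    exact ⟨fun h => h.1, fun h => ⟨h, hL⟩⟩
  | ndef m =>
    simp only [satLit, mem_Jlt_iff]
    exact ⟨fun h h' => h ⟨h', hL⟩, fun h h' => h h'.1⟩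

lemma satBody_slice_iff {k : ℕ} {B : Finset Lit} (hB : supLevel ℓ B < k) :
    satBody (Jlt P ℓ k) B ↔ satBody (Jfix P ℓ) B := by
  unfold satBody
  refine forall₂_congr fun L hL => satLit_slice_iff P ℓ ?_
  exact lt_of_le_of_lt (Finset.le_sup hL) hB

lemma obj_mem_star {J : Set OLit} {l : OLit} : Lit.obj l ∈ star J ↔ l ∈ J := by
  simp [star]

lemma ndef_mem_star {J : Set OLit} {l : OLit} : Lit.ndef l ∈ star J ↔ l ∉ J := by
  simp [star]

lemma mem_star_iff_satLit {J : Set OLit} {L : Lit} : L ∈ star J ↔ satLit J L := by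
  cases L <;> simp [star, satLit]

lemma subset_star_iff {J : Set OLit} {B : Finset Lit} :
    (B : Set Lit) ⊆ star J ↔ satBody J B := by
  constructor
  · intro h L hL
    exact mem_star_iff_satLit.mp (h (Finset.mem_coe.mpr hL))
  · intro h L hL
    exact mem_star_iff_satLit.mpr (h L (Finset.mem_coe.mp hL))

lemma satBody_empty (S : Set OLit) : satBody S ∅ := fun _ hL => absurd hL (by simp)

lemma OLit.compl_compl (l : OLit) : l.compl.compl = l := by
  cases l <;> rfl

lemma mem_con_obj {l : OLit} {M : Lit} :
    M ∈ con (Lit.obj l) ↔ M = Lit.ndef l ∨ M = Lit.obj l.compl := by simp [con]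

lemma mem_con_ndef {l : OLit} {M : Lit} :
    M ∈ con (Lit.ndef l) ↔ M = Lit.obj l := by simp [con]

lemma litLevel_con (hc : ∀ l : OLit, ℓ l = ℓ l.compl) {L M : Lit} (h : M ∈ con L) :
    litLevel ℓ M = litLevel ℓ L := by
  cases L with
  | obj l =>
    rcases mem_con_obj.mp h with rfl | rfl
    · rfl
    · exact (hc l).symm
  | ndef l =>
    rcases mem_con_ndef.mp h with rfl
    rfl

lemma infLevel_con (hc : ∀ l : OLit, ℓ l = ℓ l.compl) (L : Lit) :
    infLevel ℓ (con L) = litLevel ℓ L := by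
  have key : litLevel ℓ '' ((con L : Finset Lit) : Set Lit) = {litLevel ℓ L} := by
    ext x
    simp only [Set.mem_image, Finset.mem_coe, Set.mem_singleton_iff]
    constructor
    · rintro ⟨M, hM, rfl⟩
      exact litLevel_con ℓ hc hM
    · rintro rfl
      cases L with
      | obj l => exact ⟨Lit.ndef l, mem_con_obj.mpr (Or.inl rfl), rfl⟩
      | ndef l => exact ⟨Lit.obj l, mem_con_ndef.mpr rfl, rfl⟩
  unfold infLevel
  rw [key]
  exact csInf_singleton _

section Main

variable (hc : ∀ l : OLit, ℓ l = ℓ l.compl)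
  (hacy : ∀ π ∈ allRules P, supLevel ℓ π.body < litLevel ℓ π.head)

include hc hacy

lemma sup_lt_of_con {i : Fin n} {σ : Rule} {l : OLit} (hσ : σ ∈ P i)
    (h : σ.head ∈ con (Lit.obj l)) : supLevel ℓ σ.body < ℓ l := by
  have h2 := hacy σ ⟨i, hσ⟩
  rwa [litLevel_con ℓ hc h] at h2

omit hc in
lemma sup_lt_of_head {i : Fin n} {π : Rule} {l : OLit} (hπ : π ∈ P i)
    (h : π.head = Lit.obj l) : supLevel ℓ π.body < ℓ l := by
  have h2 := hacy π ⟨i, hπ⟩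
  rwa [h] at h2

/-- Non-rejection at the slice implies non-rejection w.r.t. `star (Jfix P ℓ)`. -/
lemma nonrej_star {l : OLit} {i : Fin n} {π : Rule} (hπ : π ∈ P i)
    (hhead : π.head = Lit.obj l)
    (hnr : ¬ ∃ j : Fin n, i < j ∧ ∃ σ ∈ P j, σ.head ∈ con (Lit.obj l) ∧
      satBody (Jlt P ℓ (ℓ l)) σ.body) :
    ¬ rejIn P (star (Jfix P ℓ)) i π := by
  rintro ⟨j, hij, σ, hσ, hconf, hsub⟩
  rw [hhead] at hconf
  have hsb : satBody (Jfix P ℓ) σ.body := subset_star_iff.mp hsub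
  exact hnr ⟨j, hij, σ, hσ, hconf,
    (satBody_slice_iff P ℓ (sup_lt_of_con P ℓ hc hacy hσ hconf)).mpr hsb⟩

variable (hsolved : conflictsSolved P)
include hsolved

lemma interp_Jfix : Interp (Jfix P ℓ) := by
  intro p ⟨h1, h2⟩
  rw [mem_Jfix_iff] at h1 h2
  have hlev : ℓ (OLit.neg p) = ℓ (OLit.pos p) := (hc (OLit.pos p)).symm
  rw [hlev] at h2
  obtain ⟨i, π, hπ, hπh, hπb, hπnr⟩ := h1
  obtain ⟨i', σ, hσ, hσh, hσb, hσnr⟩ := h2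
  rcases lt_trichotomy i i' with hlt | heq | hgt
  · exact hπnr ⟨i', hlt, σ, hσ, by rw [hσh]; exact mem_con_obj.mpr (Or.inr rfl), hσb⟩
  · subst heq
    have hcon : σ.head ∈ con π.head := by
      rw [hσh, hπh]; exact mem_con_obj.mpr (Or.inr rfl)
    obtain ⟨j, hij, ρ, hρ, hρb, hd⟩ := hsolved i π hπ σ hσ hcon
    rcases hd with hd | hd
    · rw [hπh] at hd
      exact hπnr ⟨j, hij, ρ, hρ, hd, by rw [hρb]; exact satBody_empty _⟩
    · rw [hσh] at hd
      exact hσnr ⟨j, hij, ρ, hρ, hd, by rw [hρb]; exact satBody_empty _⟩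
  · exact hσnr ⟨i, hgt, π, hπ, by rw [hπh]; exact mem_con_obj.mpr (Or.inr rfl), hπb⟩

lemma extWS_Jfix : isExtWS P (Jfix P ℓ) := by
  refine ⟨interp_Jfix P ℓ hc hacy hsolved, ℓ, ?_, ?_⟩
  · -- condition (1)
    intro i π hπ hnrej hbody
    cases hh : π.head with
    | obj l =>
      have hsup : supLevel ℓ π.body < ℓ l := sup_lt_of_head P ℓ hacy hπ hh
      have hbs : satBody (Jlt P ℓ (ℓ l)) π.body :=
        (satBody_slice_iff P ℓ hsup).mpr hbody
      show satLit (Jfix P ℓ) (Lit.obj l)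
      by_contra hl
      have hns : ¬ suppAt P (Jlt P ℓ (ℓ l)) l := fun hs => hl ((mem_Jfix_iff P ℓ).mpr hs)
      have hrej : ∃ j : Fin n, i < j ∧ ∃ σ ∈ P j, σ.head ∈ con (Lit.obj l) ∧
          satBody (Jlt P ℓ (ℓ l)) σ.body := by
        by_contra hnr
        exact hns ⟨i, π, hπ, hh, hbs, hnr⟩
      obtain ⟨j, hij, σ, hσ, hconf, hσb⟩ := hrej
      have hσsup : supLevel ℓ σ.body < ℓ l := sup_lt_of_con P ℓ hc hacy hσ hconf
      refine hnrej ⟨j, hij, σ, hσ, by rw [hh]; exact hconf,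
        (satBody_slice_iff P ℓ hσsup).mp hσb, ?_⟩
      rw [infLevel_con ℓ hc, hh]
      exact hσsup
    | ndef l =>
      have hsup : supLevel ℓ π.body < ℓ l := by
        have h2 := hacy π ⟨i, hπ⟩; rwa [hh] at h2
      show satLit (Jfix P ℓ) (Lit.ndef l)
      intro hl
      obtain ⟨i', π', hπ', hh', hb', hnr'⟩ := (mem_Jfix_iff P ℓ).mp hl
      have hπ'sup : supLevel ℓ π'.body < ℓ l := sup_lt_of_head P ℓ hacy hπ' hh'
      have hlpos : 0 < ℓ l := lt_of_le_of_lt (Nat.zero_le _) hπ'sup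
      rcases lt_trichotomy i' i with hlt | heq | hgt
      · exact hnr' ⟨i, hlt, π, hπ, by rw [hh]; exact mem_con_obj.mpr (Or.inl rfl),
          (satBody_slice_iff P ℓ hsup).mpr hbody⟩
      · subst heq
        have hcon : π'.head ∈ con π.head := by
          rw [hh', hh]; exact mem_con_ndef.mpr rfl
        obtain ⟨j, hij, ρ, hρ, hρb, hd⟩ := hsolved i' π hπ π' hπ' hcon
        rcases hd with hd | hd
        · refine hnrej ⟨j, hij, ρ, hρ, hd, by rw [hρb]; exact satBody_empty _, ?_⟩
          rw [infLevel_con ℓ hc, hh, hρb]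
          simpa [supLevel, litLevel] using hlpos
        · rw [hh'] at hd
          exact hnr' ⟨j, hij, ρ, hρ, hd, by rw [hρb]; exact satBody_empty _⟩
      · refine hnrej ⟨i', hgt, π', hπ', by rw [hh', hh]; exact mem_con_ndef.mpr rfl,
          (satBody_slice_iff P ℓ hπ'sup).mp hb', ?_⟩
        rw [infLevel_con ℓ hc, hh]
        exact hπ'sup
  · -- condition (2)
    intro l hl
    obtain ⟨i, π, hπ, hh, hb, hnr⟩ := (mem_Jfix_iff P ℓ).mp hl
    have hsup : supLevel ℓ π.body < ℓ l := sup_lt_of_head P ℓ hacy hπ hh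
    exact ⟨(i, π), ⟨hπ, nonrej_star P ℓ hc hacy hπ hh hnr⟩, hh,
      (satBody_slice_iff P ℓ hsup).mp hb, hsup⟩

lemma rd_sub : ∀ k, TIter P (Jfix P ℓ) k ⊆ star (Jfix P ℓ) := by
  intro k
  induction k with
  | zero => simp [TIter]
  | succ k ih =>
    rintro L ⟨hfirst, hnb⟩
    rcases hfirst with ⟨⟨i, π⟩, ⟨hπ, hxnr⟩, hhead, hbsub⟩ | ⟨l, hl, rfl⟩
    · have hbJ : satBody (Jfix P ℓ) π.body :=
        subset_star_iff.mp (fun M hM => ih (hbsub hM))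
      cases L with
      | obj l =>
        have hsup : supLevel ℓ π.body < ℓ l := sup_lt_of_head P ℓ hacy hπ hhead
        refine obj_mem_star.mpr ((mem_Jfix_iff P ℓ).mpr
          ⟨i, π, hπ, hhead, (satBody_slice_iff P ℓ hsup).mpr hbJ, ?_⟩)
        rintro ⟨j, hij, σ, hσ, hconf, hσb⟩
        have hσsup : supLevel ℓ σ.body < ℓ l := sup_lt_of_con P ℓ hc hacy hσ hconf
        refine hxnr ⟨j, hij, σ, hσ, by rw [hhead]; exact hconf, ?_⟩
        exact subset_star_iff.mpr ((satBody_slice_iff P ℓ hσsup).mp hσb)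
      | ndef l =>
        refine ndef_mem_star.mpr ?_
        intro hl
        obtain ⟨i', π', hπ', hh', hb', hnr'⟩ := (mem_Jfix_iff P ℓ).mp hl
        have hπ'sup : supLevel ℓ π'.body < ℓ l := sup_lt_of_head P ℓ hacy hπ' hh'
        refine hnb ⟨(i', π'), ⟨hπ', ?_⟩, by rw [hh']; exact mem_con_ndef.mpr rfl,
          subset_star_iff.mpr ((satBody_slice_iff P ℓ hπ'sup).mp hb')⟩
        rintro ⟨j, hij, σ, hσ, hconf, hσb⟩
        rw [hh'] at hconf
        have hσsup : supLevel ℓ σ.body < ℓ l := sup_lt_of_con P ℓ hc hacy hσ hconf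
        have hσJ : satBody (Jfix P ℓ) σ.body :=
          subset_star_iff.mp (fun M hM => ih (hσb hM))
        exact hnr' ⟨j, hij, σ, hσ, hconf, (satBody_slice_iff P ℓ hσsup).mpr hσJ⟩
    · exact ndef_mem_star.mpr hl

lemma rd_sup : ∀ k, ∀ L ∈ star (Jfix P ℓ), litLevel ℓ L < k →
    L ∈ TIter P (Jfix P ℓ) k := by
  intro k
  induction k with
  | zero => exact fun L _ h => absurd h (Nat.not_lt_zero _)
  | succ k ih =>
    intro L hL hlev
    have hlev' : litLevel ℓ L ≤ k := Nat.lt_succ_iff.mp hlev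
    -- helper: bodies of level < current slice level are in TIter k
    have hbody_in : ∀ (B : Finset Lit), supLevel ℓ B < litLevel ℓ L →
        satBody (Jfix P ℓ) B → (B : Set Lit) ⊆ TIter P (Jfix P ℓ) k := by
      intro B hB hsat M hM
      have hM' : M ∈ B := Finset.mem_coe.mp hM
      have hMlev : litLevel ℓ M < k :=
        lt_of_lt_of_le (lt_of_le_of_lt (Finset.le_sup hM') hB) hlev'
      exact ih M (mem_star_iff_satLit.mpr (hsat M hM')) hMlev
    cases L with
    | ndef l =>
      refine ⟨Or.inr ⟨l, ndef_mem_star.mp hL, rfl⟩, ?_⟩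
      rintro ⟨⟨j, π'⟩, ⟨hπ', hπ'nr⟩, hch, hbsub⟩
      have hh' : π'.head = Lit.obj l := mem_con_ndef.mp hch
      have hπ'sup : supLevel ℓ π'.body < ℓ l := sup_lt_of_head P ℓ hacy hπ' hh'
      have hbs : satBody (Jlt P ℓ (ℓ l)) π'.body :=
        (satBody_slice_iff P ℓ hπ'sup).mpr (subset_star_iff.mp hbsub)
      have hlJ : l ∉ Jfix P ℓ := ndef_mem_star.mp hL
      have hns : ¬ suppAt P (Jlt P ℓ (ℓ l)) l := fun hs => hlJ ((mem_Jfix_iff P ℓ).mpr hs)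
      have hrej : ∃ j' : Fin n, j < j' ∧ ∃ σ ∈ P j', σ.head ∈ con (Lit.obj l) ∧
          satBody (Jlt P ℓ (ℓ l)) σ.body := by
        by_contra hnr
        exact hns ⟨j, π', hπ', hh', hbs, hnr⟩
      obtain ⟨j', hjj', σ, hσ, hconf, hσb⟩ := hrej
      have hσsup : supLevel ℓ σ.body < ℓ l := sup_lt_of_con P ℓ hc hacy hσ hconf
      refine hπ'nr ⟨j', hjj', σ, hσ, by rw [hh']; exact hconf, ?_⟩
      exact hbody_in σ.body hσsup ((satBody_slice_iff P ℓ hσsup).mp hσb)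
    | obj l =>
      have hlJ : l ∈ Jfix P ℓ := obj_mem_star.mp hL
      obtain ⟨i, π, hπ, hh, hb, hnr⟩ := (mem_Jfix_iff P ℓ).mp hlJ
      have hsup : supLevel ℓ π.body < ℓ l := sup_lt_of_head P ℓ hacy hπ hh
      have hbJ : satBody (Jfix P ℓ) π.body := (satBody_slice_iff P ℓ hsup).mp hb
      refine ⟨Or.inl ⟨(i, π), ⟨hπ, nonrej_star P ℓ hc hacy hπ hh hnr⟩, hh,
        hbody_in π.body hsup hbJ⟩, ?_⟩
      rintro ⟨⟨j, π₂⟩, ⟨hπ₂, hπ₂nr⟩, hch, hbsub⟩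
      have hπ₂sup : supLevel ℓ π₂.body < ℓ l := sup_lt_of_con P ℓ hc hacy hπ₂ hch
      have hπ₂bs : satBody (Jlt P ℓ (ℓ l)) π₂.body :=
        (satBody_slice_iff P ℓ hπ₂sup).mpr (subset_star_iff.mp hbsub)
      rcases lt_trichotomy i j with hlt | heq | hgt
      · exact hnr ⟨j, hlt, π₂, hπ₂, hch, hπ₂bs⟩
      · subst heq
        have hcon : π₂.head ∈ con π.head := by rw [hh]; exact hch
        obtain ⟨j', hij', ρ, hρ, hρb, hd⟩ := hsolved i π hπ π₂ hπ₂ hcon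
        rcases hd with hd | hd
        · rw [hh] at hd
          exact hnr ⟨j', hij', ρ, hρ, hd, by rw [hρb]; exact satBody_empty _⟩
        · refine hπ₂nr ⟨j', hij', ρ, hρ, hd, ?_⟩
          rw [hρb]; simp
      · refine hπ₂nr ⟨i, hgt, π, hπ, ?_, hbody_in π.body hsup hbJ⟩
        rcases mem_con_obj.mp hch with h2 | h2 <;> rw [h2, hh]
        · exact mem_con_ndef.mpr rfl
        · exact mem_con_obj.mpr (Or.inr (by rw [OLit.compl_compl]))

lemma extRD_Jfix : isExtRD P (Jfix P ℓ) := by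
  refine ⟨interp_Jfix P ℓ hc hacy hsolved, ?_⟩
  ext L
  constructor
  · intro hL
    exact Set.mem_iUnion.mpr ⟨litLevel ℓ L + 1,
      rd_sup P ℓ hc hacy hsolved (litLevel ℓ L + 1) L hL (Nat.lt_succ_self _)⟩
  · intro hL
    obtain ⟨k, hk⟩ := Set.mem_iUnion.mp hL
    exact rd_sub P ℓ hc hacy hsolved k hk

end Main

end EarlyRecovery

/-- generalised early recovery principle. -/
theorem generalised_early_recovery (n : ℕ) (P : Fin n → Set Rule)
    (hacy : ∃ ℓ : OLit → ℕ, acyclicWrt (allRules P) ℓ)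
    (hsolved : conflictsSolved P) :
    {J : Set OLit | isExtWS P J}.Nonempty ∧
    {J : Set OLit | isExtRD P J}.Nonempty := by
  obtain ⟨ℓ, hc, hacy⟩ := hacy
  exact ⟨⟨Jfix P ℓ, extWS_Jfix P ℓ hc hacy hsolved⟩,
    ⟨Jfix P ℓ, extRD_Jfix P ℓ hc hacy hsolved⟩⟩

end RuleUpdates
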